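/- There exists a hereditary translation quiver (Γ, τ) such that (Γ^2, τ^2) is not hereditary. For instance, take Γ with vertices u_i and v_i for i ≥ 0, single arrows u_i → v_i and v_i → u_{i+1} for all i ≥ 0, and τ(u_{i+1}) = u_i, τ(v_{i+1}) = v_i (with u_0, v_0 projective): then (Γ, τ) is a hereditary translation quiver, Γ^2 has no arrows at all (no path of length 2 in Γ is sectional), yet Γ^2 has non-projective vertices; hence Γ^2 has a non-projective vertex with no incoming arrow and is not hereditary. -/
import Mathlib


/-- A quiver (given by its arrow types `A x y`) is locally finite if each
vertex has only finitely many arrows between any pair of vertices and only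
finitely many neighbours. -/
def QuiverLocFin {V : Type*} (A : V → V → Type*) : Prop :=
  (∀ x y, Finite (A x y)) ∧ (∀ x, {y | Nonempty (A x y)}.Finite) ∧
    (∀ y, {x | Nonempty (A x y)}.Finite)

/-- The partially defined translation `τ : V → Option V` is injective on its
domain. -/
def TauInjective {V : Type*} (τ : V → Option V) : Prop :=
  ∀ x y z, τ x = some z → τ y = some z → x = y

/-- A translation quiver: a locally finite quiver together with an injective
partially defined translation `τ` such that for every vertex `x` and every
vertex `y` in the domain of `τ`, the number of arrows from `x` to `y` equals
the number of arrows from `τ(y)` to `x`.  The projective vertices are those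
outside the domain of `τ` (i.e. those with `τ y = none`). -/
def IsTranslationQuiver {V : Type*} (A : V → V → Type*) (τ : V → Option V) : Prop :=
  QuiverLocFin A ∧ TauInjective τ ∧
    ∀ x y z, τ y = some z → Nat.card (A x y) = Nat.card (A z x)

/-- The `k`-th iterate of the partially defined map `τ`. -/
def iterTau {V : Type*} (τ : V → Option V) : ℕ → V → Option V
  | 0, x => some x
  | k+1, x => (τ x).bind (iterTau τ k)

/-- The sectional condition on a sequence of vertices `v 0, v 1, …, v m`:
`τ (v (s+1)) ≠ v (s-1)` for all `0 < s < m` for which `τ (v (s+1))` is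
defined. -/
def SectCond {V : Type*} (τ : V → Option V) (m : ℕ) (v : Fin (m+1) → V) : Prop :=
  ∀ (s : ℕ) (_ : 1 ≤ s) (h2 : s + 1 ≤ m),
    τ (v ⟨s+1, by omega⟩) ≠ some (v ⟨s-1, by omega⟩)

/-- `v 0, v 1, …, v m` is (the sequence of vertices of) a sectional path:
there is an arrow `v s → v (s+1)` for each `s`, and the sectional condition
holds. -/
def IsSectionalPath {V : Type*} (A : V → V → Type*) (τ : V → Option V) (m : ℕ)
    (v : Fin (m+1) → V) : Prop :=
  (∀ s : Fin m, Nonempty (A (v s.castSucc) (v s.succ))) ∧ SectCond τ m v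

/-- The type of sectional paths of length `m` from `x` to `y`: a sequence of
vertices `v 0 = x, v 1, …, v m = y` satisfying the sectional condition,
together with a chosen arrow `v s → v (s+1)` for each `s`. -/
def SectPath {V : Type*} (A : V → V → Type*) (τ : V → Option V) (m : ℕ)
    (x y : V) : Type _ :=
  Σ v : {v : Fin (m+1) → V // v 0 = x ∧ v (Fin.last m) = y ∧ SectCond τ m v},
    ∀ s : Fin m, A (v.1 s.castSucc) (v.1 s.succ)

/-- A translation quiver is hereditary if (i) every non-projective vertex has
an incoming arrow, (ii) there is no oriented cyclic path of length at least
one containing a projective vertex, and (iii) whenever there is an arrow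
`x → y` with `y` projective, `x` is projective. -/
def IsHereditary {V : Type*} (A : V → V → Type*) (τ : V → Option V) : Prop :=
  (∀ z, τ z ≠ none → ∃ z', Nonempty (A z' z)) ∧
  (¬ ∃ (k : ℕ) (v : Fin (k+2) → V),
      (∀ s : Fin (k+1), Nonempty (A (v s.castSucc) (v s.succ))) ∧
      v 0 = v (Fin.last (k+1)) ∧ ∃ s, τ (v s) = none) ∧
  (∀ x y, Nonempty (A x y) → τ y = none → τ x = none)

/-- The quiver with vertices `u_i = (i, false)` and `v_i = (i, true)` for
`i ≥ 0`, and single arrows `u_i → v_i` and `v_i → u_{i+1}`. -/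
def exA : (ℕ × Bool) → (ℕ × Bool) → Type :=
  fun p q => PLift ((p.2 = false ∧ q = (p.1, true)) ∨
    (p.2 = true ∧ q = (p.1 + 1, false)))

/-- The translation `τ (u_{i+1}) = u_i`, `τ (v_{i+1}) = v_i`, with `u_0` and
`v_0` projective. -/
def exTau : ℕ × Bool → Option (ℕ × Bool) :=
  fun p => match p.1 with
    | 0 => none
    | Nat.succ k => some (k, p.2)

lemma exA_iff (x y : ℕ × Bool) : Nonempty (exA x y) ↔
    (x.2 = false ∧ y = (x.1, true)) ∨ (x.2 = true ∧ y = (x.1 + 1, false)) := by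
  constructor
  · rintro ⟨⟨h⟩⟩; exact h
  · exact fun h => ⟨⟨h⟩⟩

/-- weight function: arrows strictly increase it -/
def wt : ℕ × Bool → ℕ := fun p => 2 * p.1 + (if p.2 then 1 else 0)

lemma wt_lt {x y : ℕ × Bool} (h : Nonempty (exA x y)) : wt x < wt y := by
  rcases (exA_iff x y).1 h with ⟨h1, h2⟩ | ⟨h1, h2⟩ <;> subst h2 <;>
    simp [wt, h1] <;> omega

lemma card_plift_congr {p q : Prop} (h : p ↔ q) :
    Nat.card (PLift p) = Nat.card (PLift q) :=
  Nat.card_congr (Equiv.plift.trans ((Equiv.ofIff h).trans Equiv.plift.symm))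

lemma step_shape {x y : ℕ × Bool} (h : Nonempty (exA x y)) :
    (x.2 = false ∧ y = (x.1, true)) ∨ (x.2 = true ∧ y = (x.1 + 1, false)) :=
  (exA_iff x y).1 h

lemma no_sect (v : Fin 3 → ℕ × Bool) (a0 : Nonempty (exA (v 0) (v 1)))
    (a1 : Nonempty (exA (v 1) (v 2)))
    (hs : exTau (v 2) ≠ some (v 0)) : False := by
  rcases step_shape a0 with ⟨b0, h01⟩ | ⟨b0, h01⟩ <;>
    rcases step_shape a1 with ⟨b1, h12⟩ | ⟨b1, h12⟩
  · rw [h01] at b1; simp at b1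
  · apply hs
    rw [h12, h01]
    show some ((v 0).1, false) = some (v 0)
    rw [← b0]
  · apply hs
    rw [h12, h01]
    show some ((v 0).1, true) = some (v 0)
    rw [← b0]
  · rw [h01] at b1; simp at b1

lemma no_sect_path (x y : ℕ × Bool) : IsEmpty (SectPath exA exTau 2 x y) := by
  constructor
  rintro ⟨⟨v, h0, hlast, hsect⟩, arr⟩
  exact no_sect v ⟨arr 0⟩ ⟨arr 1⟩ (hsect 1 le_rfl le_rfl)

lemma exTau_some {x z : ℕ × Bool} (h : exTau x = some z) : x = (z.1 + 1, z.2) := by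
  rcases x with ⟨_ | k, b⟩
  · simp [exTau] at h
  · simp only [exTau] at h
    obtain rfl : (k, b) = z := Option.some_injective _ h
    rfl

lemma exTau_none_iff (p : ℕ × Bool) : exTau p = none ↔ p.1 = 0 := by
  rcases p with ⟨_ | k, b⟩ <;> simp [exTau]

/-- There is a hereditary translation quiver whose square is not hereditary:
for the example `(exA, exTau)` above, `(exA, exTau)` is a hereditary
translation quiver, its square `Γ²` has no arrows at all (no path of length
`2` is sectional), yet `Γ²` has non-projective vertices; hence `Γ²` has a
non-projective vertex with no incoming arrow and is not hereditary. -/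
theorem stmt15 :
    IsTranslationQuiver exA exTau ∧
    IsHereditary exA exTau ∧
    (∀ x y : ℕ × Bool, IsEmpty (SectPath exA exTau 2 x y)) ∧
    (∃ z w : ℕ × Bool, iterTau exTau 2 z = some w) ∧
    (∃ z : ℕ × Bool, iterTau exTau 2 z ≠ none ∧
      ∀ z', IsEmpty (SectPath exA exTau 2 z' z)) ∧
    ¬ IsHereditary (fun x y => SectPath exA exTau 2 x y) (iterTau exTau 2) := by
  have hhered : IsHereditary exA exTau := by
    refine ⟨?_, ?_, ?_⟩
    · rintro ⟨_ | k, b⟩ hz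
      · exact absurd rfl hz
      · cases b
        · exact ⟨(k, true), ⟨⟨Or.inr ⟨rfl, rfl⟩⟩⟩⟩
        · exact ⟨(k + 1, false), ⟨⟨Or.inl ⟨rfl, rfl⟩⟩⟩⟩
    · rintro ⟨k, v, harr, hcyc, -⟩
      have hmono : StrictMono (wt ∘ v) := by
        rw [Fin.strictMono_iff_lt_succ]
        intro i
        exact wt_lt (harr i)
      have := hmono (show (0 : Fin (k + 2)) < Fin.last (k + 1) from Fin.last_pos)
      simp only [Function.comp_apply] at this
      rw [hcyc] at this
      exact lt_irrefl _ this
    · intro x y hxy hy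
      rcases step_shape hxy with ⟨b, e⟩ | ⟨b, e⟩
      · rw [exTau_none_iff] at hy ⊢
        rw [e] at hy
        exact hy
      · rw [exTau_none_iff, e] at hy
        simp at hy
  refine ⟨⟨⟨?_, ?_, ?_⟩, ?_, ?_⟩, hhered, no_sect_path, ⟨(2, false), (0, false), rfl⟩,
    ⟨(2, false), by decide, fun z' => no_sect_path z' (2, false)⟩, ?_⟩
  · intro x y
    have : Subsingleton (exA x y) := ⟨fun a b => by cases a; cases b; rfl⟩
    exact Finite.of_subsingleton
  · intro x
    apply Set.Subsingleton.finite
    intro y1 h1 y2 h2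
    rcases step_shape h1 with ⟨b, e⟩ | ⟨b, e⟩ <;> rcases step_shape h2 with ⟨b2, e2⟩ | ⟨b2, e2⟩ <;>
      simp_all
  · intro y
    apply Set.Subsingleton.finite
    intro x1 h1 x2 h2
    rcases step_shape h1 with ⟨b, e⟩ | ⟨b, e⟩ <;> rcases step_shape h2 with ⟨b2, e2⟩ | ⟨b2, e2⟩ <;>
      simp_all [Prod.ext_iff]
  · intro x y z hx hy
    rw [exTau_some hx, exTau_some hy]
  · intro x y z h
    obtain rfl := exTau_some h
    unfold exA
    apply card_plift_congr
    rcases x with ⟨i, c⟩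
    rcases z with ⟨j, b⟩
    cases b <;> cases c <;> simp [Prod.ext_iff] <;> omega
  · rintro ⟨h1, -, -⟩
    obtain ⟨z', hz'⟩ := h1 (2, false) (by decide)
    exact (no_sect_path z' (2, false)).false hz'.some
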